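/- For each irrational real number α, let B_α = {m + nα : m, n ∈ ℤ} ⊆ ℝ be the meet-semilattice under min, with ℤ² acting by (i,j)(m + nα) = (m+i) + (n+j)α. Then B_α is a ℤ²-semilattice generated by each of its elements, hence generates a minimal quasivariety; moreover, for distinct irrationals α < β, choosing integers p, q with α < p/q < β, the identity ((p,0)(x)) ∧ ((0,q)(x)) = (0,q)(x) holds in B_α but fails in B_β, so Q(B_α) ≠ Q(B_β). Consequently there are continuum many minimal quasivarieties of ℤ²-semilattices. -/

import Mathlib

inductive SLTerm (F : Type) : Type where
  | var : SLTerm F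
  | meet : SLTerm F → SLTerm F → SLTerm F
  | act : F → SLTerm F → SLTerm F

/-- Evaluation of a unary term at an element of an `F`-semilattice. -/
def SLTerm.eval {F A : Type} [SemilatticeInf A] [SMul F A] : SLTerm F → A → A
  | .var, a => a
  | .meet s t, a => s.eval a ⊓ t.eval a
  | .act g t, a => g • t.eval a

inductive SLTermN (F : Type) : Type where
  | var : ℕ → SLTermN F
  | meet : SLTermN F → SLTermN F → SLTermN F
  | act : F → SLTermN F → SLTermN F

def SLTermN.eval {F A : Type} [SemilatticeInf A] [SMul F A] : SLTermN F → (ℕ → A) → A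
  | .var n, v => v n
  | .meet s t, v => s.eval v ⊓ t.eval v
  | .act g t, v => g • t.eval v

def SatQI (F : Type) (A : Type) [SemilatticeInf A] [SMul F A]
    (prem : List (SLTermN F × SLTermN F)) (c : SLTermN F × SLTermN F) : Prop :=
  ∀ v : ℕ → A, (∀ p ∈ prem, p.1.eval v = p.2.eval v) → c.1.eval v = c.2.eval v

/-- `B` belongs to the quasivariety generated by `A`. -/
def InQ (F : Type) (A B : Type) [SemilatticeInf A] [SMul F A]
    [SemilatticeInf B] [SMul F B] : Prop :=
  ∀ prem c, SatQI F A prem c → SatQI F B prem c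

/-- `B` belongs to the variety generated by `A`. -/
def InV (F : Type) (A B : Type) [SemilatticeInf A] [SMul F A]
    [SemilatticeInf B] [SMul F B] : Prop :=
  ∀ s t : SLTermN F, (∀ v : ℕ → A, s.eval v = t.eval v) → ∀ v : ℕ → B, s.eval v = t.eval v

def IsHom (F : Type) {A B : Type} [SemilatticeInf A] [SMul F A] [SemilatticeInf B] [SMul F B]
    (φ : A → B) : Prop :=
  (∀ x y : A, φ (x ⊓ y) = φ x ⊓ φ y) ∧ ∀ (g : F) (x : A), φ (g • x) = g • φ x

/-- The subuniverse of `A` generated by `a`. -/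
def genSet (F : Type) {A : Type} [SemilatticeInf A] [SMul F A] (a : A) : Set A :=
  Set.range fun t : SLTerm F => t.eval a

/-- The quasivariety generated by `A` is a minimal quasivariety of `F`-semilattices. -/
def MinGen (F : Type) [CommGroup F] (A : Type) [SemilatticeInf A] [MulAction F A] : Prop :=
  Nontrivial A ∧
    ∀ (B : Type) [SemilatticeInf B] [MulAction F B],
      (∀ (g : F) (x y : B), g • (x ⊓ y) = g • x ⊓ g • y) →
      InQ F A B → Nontrivial B → InQ F B A

/-- The free abelian group `ℤ²`, written multiplicatively. -/
abbrev Zsq : Type := Multiplicative ℤ × Multiplicative ℤ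

/-- The carrier `B_α = {m + nα : m, n ∈ ℤ} ⊆ ℝ`. -/
def Bcar (α : ℝ) : Type := {x : ℝ // ∃ m n : ℤ, x = m + n * α}

noncomputable instance (α : ℝ) : SemilatticeInf (Bcar α) :=
  inferInstanceAs (SemilatticeInf {x : ℝ // ∃ m n : ℤ, x = m + n * α})

noncomputable instance (α : ℝ) : SMul Zsq (Bcar α) :=
  ⟨fun g x => ⟨x.1 + (Multiplicative.toAdd g.1 : ℤ) + (Multiplicative.toAdd g.2 : ℤ) * α, by
    obtain ⟨m, n, h⟩ := x.2
    exact ⟨m + Multiplicative.toAdd g.1, n + Multiplicative.toAdd g.2, by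
      rw [h]; push_cast; ring⟩⟩⟩

theorem Bcar.smul_val (α : ℝ) (g : Zsq) (x : Bcar α) :
    (g • x).1 = x.1 + (Multiplicative.toAdd g.1 : ℤ) + (Multiplicative.toAdd g.2 : ℤ) * α :=
  rfl

noncomputable instance (α : ℝ) : MulAction Zsq (Bcar α) where
  one_smul x := by
    apply Subtype.ext
    rw [Bcar.smul_val]
    simp
  mul_smul g h x := by
    apply Subtype.ext
    rw [Bcar.smul_val, Bcar.smul_val, Bcar.smul_val]
    simp only [Prod.fst_mul, Prod.snd_mul, toAdd_mul]
    push_cast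
    ring

-- tests
example (α : ℝ) (x y : Bcar α) : (x ≤ y) ↔ x.1 ≤ y.1 := Iff.rfl
lemma Bcar.inf_val (α : ℝ) (x y : Bcar α) : (x ⊓ y).1 = min x.1 y.1 := by
  rcases le_total x.1 y.1 with h | h
  · rw [inf_eq_left.2 (show x ≤ y from h), min_eq_left h]
  · rw [inf_eq_right.2 (show y ≤ x from h), min_eq_right h]
lemma uniq {α : ℝ} (hα : Irrational α) {m n m' n' : ℤ} (h : (m:ℝ) + n * α = m' + n' * α) :
    m = m' ∧ n = n' := by
  by_cases hn : n = n'
  · subst hn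
    refine ⟨?_, rfl⟩
    exact_mod_cast (by linarith : (m:ℝ) = m')
  · exfalso
    have hne : ((n - n' : ℤ) : ℝ) ≠ 0 := by
      exact_mod_cast sub_ne_zero.2 hn
    have : α = ((m' - m : ℤ) : ℝ) / ((n - n' : ℤ) : ℝ) := by
      rw [eq_div_iff hne]
      push_cast
      ring_nf
      ring_nf at h
      linarith
    exact (irrational_iff_ne_rational α).1 hα (m' - m) (n - n') (sub_ne_zero.2 hn) this

lemma eval_comp {A B : Type} [SemilatticeInf A] [SMul Zsq A] [SemilatticeInf B] [SMul Zsq B]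
    {φ : A → B} (hφ : IsHom Zsq φ) (t : SLTermN Zsq) (v : ℕ → A) :
    t.eval (fun n => φ (v n)) = φ (t.eval v) := by
  induction t with
  | var n => rfl
  | meet s t hs ht => simp [SLTermN.eval, hs, ht, hφ.1]
  | act g t ht => simp [SLTermN.eval, ht, hφ.2]

lemma inq_of_emb {A B : Type} [SemilatticeInf A] [SMul Zsq A] [SemilatticeInf B] [SMul Zsq B]
    (φ : A → B) (hφ : IsHom Zsq φ) (hinj : Function.Injective φ) :
    InQ Zsq B A := by
  intro prem c hsat v hv
  apply hinj
  rw [← eval_comp hφ, ← eval_comp hφ]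
  exact hsat _ (fun p hp => by rw [eval_comp hφ, eval_comp hφ, hv p hp])

noncomputable def pr {α : ℝ} (x : Bcar α) : ℤ × ℤ := (x.2.choose, x.2.choose_spec.choose)

lemma pr_spec {α : ℝ} (x : Bcar α) : x.1 = ((pr x).1 : ℝ) + ((pr x).2 : ℝ) * α :=
  x.2.choose_spec.choose_spec

lemma pr_eq {α : ℝ} (hα : Irrational α) (x : Bcar α) {m n : ℤ} (h : x.1 = (m:ℝ) + n * α) :
    pr x = (m, n) := by
  have := uniq hα ((pr_spec x).symm.trans h)
  exact Prod.ext this.1 this.2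

noncomputable def goff {α : ℝ} (x : Bcar α) : Zsq :=
  (Multiplicative.ofAdd (pr x).1, Multiplicative.ofAdd (pr x).2)

-- offset of a group element
noncomputable def off (α : ℝ) (g : Zsq) : ℝ :=
  ((Multiplicative.toAdd g.1 : ℤ) : ℝ) + ((Multiplicative.toAdd g.2 : ℤ) : ℝ) * α

lemma smul_val' (α : ℝ) (g : Zsq) (x : Bcar α) : (g • x).1 = x.1 + off α g := by
  rw [Bcar.smul_val, off]; ring

lemma off_goff {α : ℝ} (x : Bcar α) : off α (goff x) = x.1 := by
  rw [off, goff]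
  simp
  exact (pr_spec x).symm

lemma gne_one {α : ℝ} (hα : Irrational α) {g : Zsq} (hg : g ≠ 1) : off α g ≠ 0 := by
  intro h
  have : ((Multiplicative.toAdd g.1 : ℤ) : ℝ) + (Multiplicative.toAdd g.2 : ℤ) * α
      = ((0:ℤ):ℝ) + ((0:ℤ):ℝ) * α := by rw [← off]; simpa using h
  have h2 := uniq hα this
  apply hg
  ext
  · simpa using h2.1
  · simpa using h2.2

/-- Identities `g•x ⊓ h•x = g•x` transfer from `Bcar α` to `B`. -/
lemma ident_B {α : ℝ} {B : Type} [SemilatticeInf B] [MulAction Zsq B]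
    (hQ : InQ Zsq (Bcar α) B) (g h : Zsq) (hle : off α g ≤ off α h) (bb : B) :
    g • bb ⊓ h • bb = g • bb := by
  have hA : SatQI Zsq (Bcar α)
      [] (SLTermN.meet (.act g (.var 0)) (.act h (.var 0)), SLTermN.act g (.var 0)) := by
    intro v _
    apply Subtype.ext
    simp only [SLTermN.eval]
    rw [Bcar.inf_val, smul_val', smul_val']
    exact min_eq_left (by linarith)
  have := hQ _ _ hA (fun _ => bb) (by simp)
  simpa [SLTermN.eval] using this

/-- If `B` is nontrivial, the action on `B` is free. -/
lemma free_B {α : ℝ} (hα : Irrational α) {B : Type} [SemilatticeInf B] [MulAction Zsq B]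
    (hQ : InQ Zsq (Bcar α) B) (hnt : Nontrivial B) {g : Zsq} (hg : g ≠ 1) (bb : B) :
    g • bb ≠ bb := by
  intro hfix
  obtain ⟨x, y, hxy⟩ := hnt
  have hA : SatQI Zsq (Bcar α) [(SLTermN.act g (.var 0), SLTermN.var 0)]
      (SLTermN.var 1, SLTermN.var 2) := by
    intro v hv
    exfalso
    have := hv _ (List.mem_singleton.2 rfl)
    simp only [SLTermN.eval] at this
    have hval := congrArg Subtype.val this
    rw [smul_val'] at hval
    exact gne_one hα hg (by linarith)
  have := hQ _ _ hA (fun n => if n = 0 then bb else if n = 1 then x else y)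
    (by
      intro p hp
      simp only [List.mem_singleton] at hp
      subst hp
      simpa [SLTermN.eval] using hfix)
  simpa [SLTermN.eval] using (hxy this)

lemma goff_smul {α : ℝ} (hα : Irrational α) (g : Zsq) (x : Bcar α) :
    goff (g • x) = g * goff x := by
  have h1 : (g • x).1 = ((((pr x).1 + Multiplicative.toAdd g.1 : ℤ)) : ℝ)
      + (((pr x).2 + Multiplicative.toAdd g.2 : ℤ) : ℝ) * α := by
    rw [Bcar.smul_val, pr_spec x]
    push_cast
    ring
  have h2 := pr_eq hα _ h1
  rw [goff, goff, h2]
  ext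
  · simp [Prod.fst_mul]
    exact add_comm _ _
  · simp [Prod.snd_mul]
    exact add_comm _ _

lemma emb_main {α : ℝ} (hα : Irrational α) {B : Type} [SemilatticeInf B] [MulAction Zsq B]
    (hQ : InQ Zsq (Bcar α) B) (hnt : Nontrivial B) : InQ Zsq B (Bcar α) := by
  obtain ⟨b, c, hbc⟩ := hnt
  set φ : Bcar α → B := fun x => goff x • b with hφdef
  have hinj : Function.Injective φ := by
    intro x y hxy
    by_cases hg : goff x = goff y
    · apply Subtype.ext
      rw [pr_spec x, pr_spec y]
      have : pr x = pr y := by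
        have h1 : Multiplicative.ofAdd (pr x).1 = Multiplicative.ofAdd (pr y).1 :=
          congrArg Prod.fst hg
        have h2 : Multiplicative.ofAdd (pr x).2 = Multiplicative.ofAdd (pr y).2 :=
          congrArg Prod.snd hg
        exact Prod.ext (by simpa using h1) (by simpa using h2)
      rw [this]
    · exfalso
      have hne : (goff y)⁻¹ * goff x ≠ 1 := fun h => hg (inv_mul_eq_one.1 h).symm
      apply free_B hα hQ ⟨b, c, hbc⟩ hne b
      have : (goff y)⁻¹ • (goff x • b) = (goff y)⁻¹ • (goff y • b) := by
        rw [show goff x • b = goff y • b from hxy]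
      rwa [inv_smul_smul, ← mul_smul] at this
  have hhom : IsHom Zsq φ := by
    constructor
    · intro x y
      rcases le_total x.1 y.1 with h | h
      · have hxy : x ⊓ y = x := inf_eq_left.2 (show x ≤ y from h)
        rw [hxy]
        have := ident_B hQ (goff x) (goff y) (by rw [off_goff, off_goff]; exact h) b
        exact this.symm
      · have hxy : x ⊓ y = y := inf_eq_right.2 (show y ≤ x from h)
        rw [hxy]
        have := ident_B hQ (goff y) (goff x) (by rw [off_goff, off_goff]; exact h) b
        rw [inf_comm] at this
        exact this.symm
    · intro g x
      show goff (g • x) • b = g • goff x • b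
      rw [goff_smul hα, mul_smul]
  exact inq_of_emb φ hhom hinj

lemma Bcar.nontriv (α : ℝ) : Nontrivial (Bcar α) := by
  refine ⟨⟨0, 0, 0, by norm_num⟩, ⟨1, 1, 0, by norm_num⟩, ?_⟩
  intro h
  have := congrArg Subtype.val h
  norm_num at this

lemma hdist_all (α : ℝ) (g : Zsq) (x y : Bcar α) : g • (x ⊓ y) = g • x ⊓ g • y := by
  apply Subtype.ext
  rw [smul_val', Bcar.inf_val, Bcar.inf_val, smul_val', smul_val']
  rcases le_total x.1 y.1 with h | h
  · rw [min_eq_left h, min_eq_left (by linarith)]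
  · rw [min_eq_right h, min_eq_right (by linarith)]

lemma hsep_all : ∀ α β : ℝ, Irrational α → Irrational β → α < β →
      ∀ p q : ℤ, 0 < q → α < (p : ℝ) / (q : ℝ) → (p : ℝ) / (q : ℝ) < β →
        (∀ x : Bcar α,
          (((Multiplicative.ofAdd p, (1 : Multiplicative ℤ)) : Zsq) • x) ⊓
              ((((1 : Multiplicative ℤ), Multiplicative.ofAdd q) : Zsq) • x) =
            (((1 : Multiplicative ℤ), Multiplicative.ofAdd q) : Zsq) • x) ∧
        ¬ (∀ x : Bcar β,
          (((Multiplicative.ofAdd p, (1 : Multiplicative ℤ)) : Zsq) • x) ⊓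
              ((((1 : Multiplicative ℤ), Multiplicative.ofAdd q) : Zsq) • x) =
            (((1 : Multiplicative ℤ), Multiplicative.ofAdd q) : Zsq) • x) := by
  intro α β hα hβ hab p q hq h1 h2
  have hq' : (0 : ℝ) < q := by exact_mod_cast hq
  have o1α : off α ((Multiplicative.ofAdd p, (1 : Multiplicative ℤ)) : Zsq) = p := by
    simp [off]
  have o2α : off α (((1 : Multiplicative ℤ), Multiplicative.ofAdd q) : Zsq) = q * α := by
    simp [off]
  have o1β : off β ((Multiplicative.ofAdd p, (1 : Multiplicative ℤ)) : Zsq) = p := by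
    simp [off]
  have o2β : off β (((1 : Multiplicative ℤ), Multiplicative.ofAdd q) : Zsq) = q * β := by
    simp [off]
  constructor
  · intro x
    apply Subtype.ext
    rw [Bcar.inf_val, smul_val', smul_val', o1α, o2α]
    apply min_eq_right
    have h3 : (q : ℝ) * α < p := by
      rw [mul_comm]
      exact (lt_div_iff₀ hq').1 h1
    linarith
  · intro hall
    obtain ⟨x0, hx0⟩ : ∃ x0 : Bcar β, x0.1 = 0 := ⟨⟨0, 0, 0, by norm_num⟩, rfl⟩
    have := congrArg Subtype.val (hall x0)
    rw [Bcar.inf_val, smul_val', smul_val', o1β, o2β, hx0] at this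
    have h5 : (0:ℝ) + q * β ≤ 0 + p := min_eq_right_iff.1 this
    have h4 : (p : ℝ) < q * β := by
      rw [mul_comm]
      exact (div_lt_iff₀ hq').1 h2
    linarith

lemma core_sep {α β : ℝ} (hα : Irrational α) (hβ : Irrational β) (hlt : α < β)
    (hQ : InQ Zsq (Bcar α) (Bcar β)) : False := by
  obtain ⟨r, hr1, hr2⟩ := exists_rat_btwn hlt
  have hq : (0 : ℤ) < (r.den : ℤ) := by exact_mod_cast r.pos
  have hcast : ((r.num : ℝ) / ((r.den : ℤ) : ℝ)) = (r : ℝ) := by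
    push_cast
    rw [Rat.cast_def]
  obtain ⟨hid, hnid⟩ := hsep_all α β hα hβ hlt r.num (r.den : ℤ) hq
    (by rw [hcast]; exact hr1) (by rw [hcast]; exact hr2)
  apply hnid
  intro x
  have hA : SatQI Zsq (Bcar α) []
      (SLTermN.meet (.act ((Multiplicative.ofAdd r.num, (1 : Multiplicative ℤ)) : Zsq) (.var 0))
          (.act (((1 : Multiplicative ℤ), Multiplicative.ofAdd (r.den : ℤ)) : Zsq) (.var 0)),
        SLTermN.act (((1 : Multiplicative ℤ), Multiplicative.ofAdd (r.den : ℤ)) : Zsq) (.var 0)) := by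
    intro v _
    simpa [SLTermN.eval] using hid (v 0)
  have := hQ _ _ hA (fun _ => x) (by simp)
  simpa [SLTermN.eval] using this
/-- Each `B_α` (α irrational) is a `ℤ²`-semilattice generated by each of its elements,
hence generates a minimal quasivariety; for irrationals `α < β` and integers `p, q` with
`0 < q` and `α < p/q < β`, the identity `(p,0)(x) ⊓ (0,q)(x) = (0,q)(x)` holds in `B_α`
but fails in `B_β`; consequently distinct irrationals give distinct minimal
quasivarieties, so there are continuum many minimal quasivarieties of `ℤ²`-semilattices. -/
theorem stmt_19 :
    (∀ α : ℝ, Irrational α →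
      (∀ (g : Zsq) (x y : Bcar α), g • (x ⊓ y) = g • x ⊓ g • y) ∧
      (∀ x y : Bcar α, ∃ t : SLTerm Zsq, t.eval x = y) ∧
      MinGen Zsq (Bcar α)) ∧
    (∀ α β : ℝ, Irrational α → Irrational β → α < β →
      ∀ p q : ℤ, 0 < q → α < (p : ℝ) / (q : ℝ) → (p : ℝ) / (q : ℝ) < β →
        (∀ x : Bcar α,
          (((Multiplicative.ofAdd p, (1 : Multiplicative ℤ)) : Zsq) • x) ⊓
              ((((1 : Multiplicative ℤ), Multiplicative.ofAdd q) : Zsq) • x) =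
            (((1 : Multiplicative ℤ), Multiplicative.ofAdd q) : Zsq) • x) ∧
        ¬ (∀ x : Bcar β,
          (((Multiplicative.ofAdd p, (1 : Multiplicative ℤ)) : Zsq) • x) ⊓
              ((((1 : Multiplicative ℤ), Multiplicative.ofAdd q) : Zsq) • x) =
            (((1 : Multiplicative ℤ), Multiplicative.ofAdd q) : Zsq) • x)) ∧
    (∀ α β : ℝ, Irrational α → Irrational β → α ≠ β →
      ¬ (InQ Zsq (Bcar α) (Bcar β) ∧ InQ Zsq (Bcar β) (Bcar α))) := by
  refine ⟨?_, hsep_all, ?_⟩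
  · intro α hα
    refine ⟨hdist_all α, ?_, Bcar.nontriv α, ?_⟩
    · intro x y
      refine ⟨SLTerm.act ((Multiplicative.ofAdd ((pr y).1 - (pr x).1),
        Multiplicative.ofAdd ((pr y).2 - (pr x).2)) : Zsq) SLTerm.var, ?_⟩
      show ((Multiplicative.ofAdd ((pr y).1 - (pr x).1),
        Multiplicative.ofAdd ((pr y).2 - (pr x).2)) : Zsq) • x = y
      apply Subtype.ext
      rw [smul_val']
      have hx := pr_spec x
      have hy := pr_spec y
      simp only [off, toAdd_ofAdd]
      push_cast
      linarith
    · intro B _ _ _ hQ hnt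
      exact emb_main hα hQ hnt
  · intro α β hα hβ hne ⟨h1, h2⟩
    rcases hne.lt_or_gt with hlt | hlt
    · exact core_sep hα hβ hlt h1
    · exact core_sep hβ hα hlt h2
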